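/- For a twice continuously differentiable function f : ℝ³ → ℝ of variables (φ, θ, z), define the first-order operators X̄f = cos(θ+z)·∂_φ f − (1/2)·sin(θ+z)·(coth(φ/2) − tanh(φ/2))·∂_θ f − tanh(φ/2)·sin(θ+z)·∂_z f and Ȳf = sin(θ+z)·∂_φ f + (1/2)·cos(θ+z)·(coth(φ/2) − tanh(φ/2))·∂_θ f + tanh(φ/2)·cos(θ+z)·∂_z f. Then at every point p = (φ, θ, z) with φ ≠ 0, and for every f that is C² on a neighbourhood of p: X̄(X̄f)(p) + Ȳ(Ȳf)(p) = ∂²_{φφ}f(p) + (1/sinh²φ)·∂²_{θθ}f(p) + tanh²(φ/2)·∂²_{zz}f(p) + (1/cosh²(φ/2))·∂²_{θz}f(p) + coth(φ)·∂_φ f(p). (X̄ and Ȳ are the left-invariant vector fields of SL(2,ℝ) in cylindrical coordinates, and the right-hand side is twice the subLaplacian of SL(2,ℝ).) -/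

import Mathlib

/-- Partial derivative of `f : ℝ³ → ℝ` in the `i`-th coordinate direction. -/
noncomputable def pd (i : Fin 3) (f : (Fin 3 → ℝ) → ℝ) : (Fin 3 → ℝ) → ℝ :=
  fun p => fderiv ℝ f p (Pi.single i 1)

/-- The left-invariant vector field `X̄` of `SL(2,ℝ)` in cylindrical coordinates
`p = (φ, θ, z)`, acting on functions.  Here `coth x = cosh x / sinh x`. -/
noncomputable def Xbar (f : (Fin 3 → ℝ) → ℝ) : (Fin 3 → ℝ) → ℝ := fun p =>
  Real.cos (p 1 + p 2) * pd 0 f p -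
    1 / 2 * Real.sin (p 1 + p 2) *
      (Real.cosh (p 0 / 2) / Real.sinh (p 0 / 2) - Real.tanh (p 0 / 2)) * pd 1 f p -
    Real.tanh (p 0 / 2) * Real.sin (p 1 + p 2) * pd 2 f p

/-- The left-invariant vector field `Ȳ` of `SL(2,ℝ)` in cylindrical coordinates
`p = (φ, θ, z)`, acting on functions. -/
noncomputable def Ybar (f : (Fin 3 → ℝ) → ℝ) : (Fin 3 → ℝ) → ℝ := fun p =>
  Real.sin (p 1 + p 2) * pd 0 f p +
    1 / 2 * Real.cos (p 1 + p 2) *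
      (Real.cosh (p 0 / 2) / Real.sinh (p 0 / 2) - Real.tanh (p 0 / 2)) * pd 1 f p +
    Real.tanh (p 0 / 2) * Real.cos (p 1 + p 2) * pd 2 f p

set_option maxHeartbeats 2000000 in
private lemma pd_eq (i : Fin 3) (f : (Fin 3 → ℝ) → ℝ) :
    pd i f = fun p => fderiv ℝ f p (Pi.single i 1) := rfl

set_option maxHeartbeats 2000000 in
/-- Twice the subLaplacian of `SL(2,ℝ)` in cylindrical coordinates: at
every point `p = (φ, θ, z)` with `φ ≠ 0` and for every `f` that is `C²` near `p`,
`X̄²f + Ȳ²f = ∂²_{φφ}f + (1/sinh²φ)∂²_{θθ}f + tanh²(φ/2)∂²_{zz}f + (1/cosh²(φ/2))∂²_{θz}f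
+ coth(φ)∂_φ f`. -/
theorem sl2_subLaplacian_cylindrical (p : Fin 3 → ℝ) (hp : p 0 ≠ 0)
    (f : (Fin 3 → ℝ) → ℝ) (hf : ContDiffAt ℝ 2 f p) :
    Xbar (Xbar f) p + Ybar (Ybar f) p =
      pd 0 (pd 0 f) p + 1 / Real.sinh (p 0) ^ 2 * pd 1 (pd 1 f) p +
        Real.tanh (p 0 / 2) ^ 2 * pd 2 (pd 2 f) p +
        1 / Real.cosh (p 0 / 2) ^ 2 * pd 1 (pd 2 f) p +
        Real.cosh (p 0) / Real.sinh (p 0) * pd 0 f p := by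
  have hp2 : p 0 / 2 ≠ 0 := by simpa using hp
  have hsne : Real.sinh (p 0 / 2) ≠ 0 := by simpa [Real.sinh_eq_zero] using hp2
  have hcne : Real.cosh (p 0 / 2) ≠ 0 := (Real.cosh_pos _).ne'
  have hf' : ContDiffAt ℝ 1 (fderiv ℝ f) p := hf.fderiv_right (le_refl 2)
  have hd2 : DifferentiableAt ℝ (fderiv ℝ f) p := hf'.differentiableAt one_ne_zero
  have h2 : HasFDerivAt (fderiv ℝ f) (fderiv ℝ (fderiv ℝ f) p) p := hd2.hasFDerivAt
  have hsymm := hf.isSymmSndFDerivAt (by simp [minSmoothness_of_isRCLikeNormedField])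
  have hU : ∀ i : Fin 3, HasFDerivAt (fun q => fderiv ℝ f q (Pi.single i 1))
      ((fderiv ℝ (fderiv ℝ f) p).flip (Pi.single i 1)) p := by
    intro i
    have h := h2.clm_apply (hasFDerivAt_const (Pi.single i 1 : Fin 3 → ℝ) p)
    simpa using h
  have hq1 : HasFDerivAt (fun q : Fin 3 → ℝ => q 1 + q 2)
      ((ContinuousLinearMap.proj 1 : (Fin 3 → ℝ) →L[ℝ] ℝ) + ContinuousLinearMap.proj 2) p :=
    (hasFDerivAt_apply 1 p).add (hasFDerivAt_apply 2 p)
  have hcos : HasFDerivAt (fun q : Fin 3 → ℝ => Real.cos (q 1 + q 2))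
      (-Real.sin (p 1 + p 2) •
        ((ContinuousLinearMap.proj 1 : (Fin 3 → ℝ) →L[ℝ] ℝ) + ContinuousLinearMap.proj 2)) p :=
    by have h := (Real.hasDerivAt_cos (p 1 + p 2)).comp_hasFDerivAt p hq1; exact h
  have hsin : HasFDerivAt (fun q : Fin 3 → ℝ => Real.sin (q 1 + q 2))
      (Real.cos (p 1 + p 2) •
        ((ContinuousLinearMap.proj 1 : (Fin 3 → ℝ) →L[ℝ] ℝ) + ContinuousLinearMap.proj 2)) p :=
    by have h := (Real.hasDerivAt_sin (p 1 + p 2)).comp_hasFDerivAt p hq1; exact h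
  have hhalf : HasDerivAt (fun x : ℝ => x / 2) (1 / 2 : ℝ) (p 0) :=
    (hasDerivAt_id (p 0)).div_const 2
  have hshd : HasDerivAt (fun x : ℝ => Real.sinh (x / 2)) (Real.cosh (p 0 / 2) * (1 / 2)) (p 0) :=
    by have h := (Real.hasDerivAt_sinh (p 0 / 2)).comp (p 0) hhalf; exact h
  have hchd : HasDerivAt (fun x : ℝ => Real.cosh (x / 2)) (Real.sinh (p 0 / 2) * (1 / 2)) (p 0) :=
    by have h := (Real.hasDerivAt_cosh (p 0 / 2)).comp (p 0) hhalf; exact h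
  have hKd := hchd.div hshd hsne
  have hTd := hshd.div hchd hcne
  have hK : HasFDerivAt (fun q : Fin 3 → ℝ => Real.cosh (q 0 / 2) / Real.sinh (q 0 / 2))
      (((Real.sinh (p 0 / 2) * (1 / 2) * Real.sinh (p 0 / 2) -
          Real.cosh (p 0 / 2) * (Real.cosh (p 0 / 2) * (1 / 2))) / Real.sinh (p 0 / 2) ^ 2) •
        (ContinuousLinearMap.proj 0 : (Fin 3 → ℝ) →L[ℝ] ℝ)) p :=
    by have h := hKd.comp_hasFDerivAt p (hasFDerivAt_apply (𝕜 := ℝ) (0 : Fin 3) p :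
        HasFDerivAt (fun q : Fin 3 → ℝ => q 0) _ p); exact h
  have hT : HasFDerivAt (fun q : Fin 3 → ℝ => Real.sinh (q 0 / 2) / Real.cosh (q 0 / 2))
      (((Real.cosh (p 0 / 2) * (1 / 2) * Real.cosh (p 0 / 2) -
          Real.sinh (p 0 / 2) * (Real.sinh (p 0 / 2) * (1 / 2))) / Real.cosh (p 0 / 2) ^ 2) •
        (ContinuousLinearMap.proj 0 : (Fin 3 → ℝ) →L[ℝ] ℝ)) p :=
    by have h := hTd.comp_hasFDerivAt p (hasFDerivAt_apply (𝕜 := ℝ) (0 : Fin 3) p :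
        HasFDerivAt (fun q : Fin 3 → ℝ => q 0) _ p); exact h
  have hXd : HasFDerivAt (fun q : Fin 3 → ℝ =>
      Real.cos (q 1 + q 2) * fderiv ℝ f q (Pi.single 0 1) -
        1 / 2 * Real.sin (q 1 + q 2) *
          (Real.cosh (q 0 / 2) / Real.sinh (q 0 / 2) - Real.sinh (q 0 / 2) / Real.cosh (q 0 / 2)) *
          fderiv ℝ f q (Pi.single 1 1) -
        Real.sinh (q 0 / 2) / Real.cosh (q 0 / 2) * Real.sin (q 1 + q 2) *
          fderiv ℝ f q (Pi.single 2 1)) _ p :=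
    ((hcos.mul (hU 0)).sub (((hsin.const_mul (1 / 2 : ℝ)).mul (hK.sub hT)).mul (hU 1))).sub
      ((hT.mul hsin).mul (hU 2))
  have hYd : HasFDerivAt (fun q : Fin 3 → ℝ =>
      Real.sin (q 1 + q 2) * fderiv ℝ f q (Pi.single 0 1) +
        1 / 2 * Real.cos (q 1 + q 2) *
          (Real.cosh (q 0 / 2) / Real.sinh (q 0 / 2) - Real.sinh (q 0 / 2) / Real.cosh (q 0 / 2)) *
          fderiv ℝ f q (Pi.single 1 1) +
        Real.sinh (q 0 / 2) / Real.cosh (q 0 / 2) * Real.cos (q 1 + q 2) *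
          fderiv ℝ f q (Pi.single 2 1)) _ p :=
    ((hsin.mul (hU 0)).add (((hcos.const_mul (1 / 2 : ℝ)).mul (hK.sub hT)).mul (hU 1))).add
      ((hT.mul hcos).mul (hU 2))
  have hXfun : Xbar f = (fun q : Fin 3 → ℝ =>
      Real.cos (q 1 + q 2) * fderiv ℝ f q (Pi.single 0 1) -
        1 / 2 * Real.sin (q 1 + q 2) *
          (Real.cosh (q 0 / 2) / Real.sinh (q 0 / 2) - Real.sinh (q 0 / 2) / Real.cosh (q 0 / 2)) *
          fderiv ℝ f q (Pi.single 1 1) -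
        Real.sinh (q 0 / 2) / Real.cosh (q 0 / 2) * Real.sin (q 1 + q 2) *
          fderiv ℝ f q (Pi.single 2 1)) := by
    funext q
    simp [Xbar, pd, Real.tanh_eq_sinh_div_cosh]
  have hYfun : Ybar f = (fun q : Fin 3 → ℝ =>
      Real.sin (q 1 + q 2) * fderiv ℝ f q (Pi.single 0 1) +
        1 / 2 * Real.cos (q 1 + q 2) *
          (Real.cosh (q 0 / 2) / Real.sinh (q 0 / 2) - Real.sinh (q 0 / 2) / Real.cosh (q 0 / 2)) *
          fderiv ℝ f q (Pi.single 1 1) +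
        Real.sinh (q 0 / 2) / Real.cosh (q 0 / 2) * Real.cos (q 1 + q 2) *
          fderiv ℝ f q (Pi.single 2 1)) := by
    funext q
    simp [Ybar, pd, Real.tanh_eq_sinh_div_cosh]
  have hsinh0 : Real.sinh (p 0) = 2 * Real.sinh (p 0 / 2) * Real.cosh (p 0 / 2) := by
    conv_lhs => rw [show p 0 = 2 * (p 0 / 2) by ring]
    rw [Real.sinh_two_mul]
  have hcosh0 : Real.cosh (p 0) = Real.cosh (p 0 / 2) ^ 2 + Real.sinh (p 0 / 2) ^ 2 := by
    conv_lhs => rw [show p 0 = 2 * (p 0 / 2) by ring]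
    rw [Real.cosh_two_mul]
  have hpy : Real.sin (p 1 + p 2) ^ 2 + Real.cos (p 1 + p 2) ^ 2 = 1 :=
    Real.sin_sq_add_cos_sq _
  have hhyp : Real.cosh (p 0 / 2) ^ 2 - Real.sinh (p 0 / 2) ^ 2 = 1 :=
    Real.cosh_sq_sub_sinh_sq _
  rw [hXfun, hYfun]
  simp only [Xbar, Ybar, pd_eq]
  rw [hXd.fderiv, hYd.fderiv]
  rw [(hU 0).fderiv, (hU 1).fderiv, (hU 2).fderiv]
  simp [Real.tanh_eq_sinh_div_cosh, hsinh0, hcosh0]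
  rw [hsymm (Pi.single 1 1) (Pi.single 0 1), hsymm (Pi.single 2 1) (Pi.single 0 1),
    hsymm (Pi.single 2 1) (Pi.single 1 1)]
  generalize ((fderiv ℝ (fderiv ℝ f) p) (Pi.single 0 1)) (Pi.single 0 1) = a00
  generalize ((fderiv ℝ (fderiv ℝ f) p) (Pi.single 0 1)) (Pi.single 1 1) = a01
  generalize ((fderiv ℝ (fderiv ℝ f) p) (Pi.single 0 1)) (Pi.single 2 1) = a02
  generalize ((fderiv ℝ (fderiv ℝ f) p) (Pi.single 1 1)) (Pi.single 1 1) = a11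
  generalize ((fderiv ℝ (fderiv ℝ f) p) (Pi.single 1 1)) (Pi.single 2 1) = a12
  generalize ((fderiv ℝ (fderiv ℝ f) p) (Pi.single 2 1)) (Pi.single 2 1) = a22
  generalize (fderiv ℝ f p) (Pi.single 0 1) = u0
  generalize (fderiv ℝ f p) (Pi.single 1 1) = u1
  generalize (fderiv ℝ f p) (Pi.single 2 1) = u2
  set C := Real.cos (p 1 + p 2) with hC
  set S := Real.sin (p 1 + p 2) with hS
  set SH := Real.sinh (p 0 / 2) with hSH
  set CH := Real.cosh (p 0 / 2) with hCH
  field_simp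
  linear_combination
    (4 * CH ^ 2 * SH ^ 2 * a00 + (CH ^ 2 - SH ^ 2) ^ 2 * a11 + 4 * SH ^ 4 * a22 +
      4 * SH ^ 2 * (CH ^ 2 - SH ^ 2) * a12 + 2 * CH * SH * (CH ^ 2 + SH ^ 2) * u0) * hpy +
    ((CH ^ 2 - SH ^ 2 + 1) * a11 + 4 * SH ^ 2 * a12) * hhyp
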